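/- Let m be a positive integer. The number of perfect matchings of the complement of the path graph P_{2m} (equivalently, the number of loopless linear chord diagrams with m chords, i.e., partitions of {1,…,2m} into m pairs none of which is a pair of consecutive integers) equals Σ_{k=0}^{m} (−1)^{m−k} · (m+k)!/(k!·(m−k)!·2^k), the sum being taken in the integers. -/

import Mathlib

open Finset
open scoped Classical

variable {α : Type*} [DecidableEq α]

def IsPairingOn (s : Finset α) (M : Finset (Sym2 α)) : Prop :=
  (∀ e ∈ M, ¬ e.IsDiag ∧ ∀ v ∈ e, v ∈ s) ∧ ∀ v ∈ s, ∃! e, e ∈ M ∧ v ∈ e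

noncomputable def pairings (s : Finset α) : Finset (Finset (Sym2 α)) :=
  (s.sym2.powerset).filter (IsPairingOn s)

lemma mem_pairings {s : Finset α} {M : Finset (Sym2 α)} :
    M ∈ pairings s ↔ IsPairingOn s M := by
  unfold pairings
  simp only [mem_filter, mem_powerset, and_iff_right_iff_imp]
  intro h e he
  have h2 := (h.1 e he).2
  obtain ⟨x, y⟩ := e
  exact Finset.mk_mem_sym2_iff.mpr ⟨h2 x (by simp), h2 y (by simp)⟩
set_option linter.unusedSectionVars false

lemma Sym2.exists_mem (e : Sym2 α) : ∃ v, v ∈ e := by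
  obtain ⟨x, y⟩ := e; exact ⟨x, by simp⟩

lemma pairing_union {s t : Finset α} {M T : Finset (Sym2 α)}
    (hM : IsPairingOn s M) (hT : IsPairingOn t T) (hst : Disjoint s t) :
    IsPairingOn (s ∪ t) (M ∪ T) := by
  constructor
  · intro e he
    rcases mem_union.mp he with h | h
    · exact ⟨(hM.1 e h).1, fun v hv => mem_union_left _ ((hM.1 e h).2 v hv)⟩
    · exact ⟨(hT.1 e h).1, fun v hv => mem_union_right _ ((hT.1 e h).2 v hv)⟩
  · intro v hv
    rcases mem_union.mp hv with h | h
    · obtain ⟨e, ⟨heM, hev⟩, hu⟩ := hM.2 v h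
      refine ⟨e, ⟨mem_union_left _ heM, hev⟩, ?_⟩
      rintro e' ⟨he', hve'⟩
      rcases mem_union.mp he' with h' | h'
      · exact hu e' ⟨h', hve'⟩
      · exact absurd ((hT.1 e' h').2 v hve') (fun hvt => disjoint_left.mp hst h hvt)
    · obtain ⟨e, ⟨heT, hev⟩, hu⟩ := hT.2 v h
      refine ⟨e, ⟨mem_union_right _ heT, hev⟩, ?_⟩
      rintro e' ⟨he', hve'⟩
      rcases mem_union.mp he' with h' | h'
      · exact absurd ((hM.1 e' h').2 v hve') (fun hvt => disjoint_right.mp hst h hvt)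
      · exact hu e' ⟨h', hve'⟩

lemma pairing_mem_sub_iff {s t : Finset α} {M T : Finset (Sym2 α)}
    (hM : IsPairingOn s M) (hT : IsPairingOn t T) (hTM : T ⊆ M) :
    ∀ e ∈ M, (e ∈ T ↔ ∃ v, v ∈ e ∧ v ∈ t) := by
  intro e he
  constructor
  · intro heT
    obtain ⟨v, hv⟩ := Sym2.exists_mem e
    exact ⟨v, hv, (hT.1 e heT).2 v hv⟩
  · rintro ⟨v, hve, hvt⟩
    obtain ⟨e', ⟨he'T, hve'⟩, _⟩ := hT.2 v hvt
    have hvs : v ∈ s := (hM.1 e he).2 v hve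
    obtain ⟨f, _, hfu⟩ := hM.2 v hvs
    have h1 : e = f := hfu e ⟨he, hve⟩
    have h2 : e' = f := hfu e' ⟨hTM he'T, hve'⟩
    rw [h1, ← h2]; exact he'T

lemma pairing_subset_vertexSubset {s t : Finset α} {M T : Finset (Sym2 α)}
    (hM : IsPairingOn s M) (hT : IsPairingOn t T) (hTM : T ⊆ M) : t ⊆ s := by
  intro v hv
  obtain ⟨e, ⟨heT, hve⟩, _⟩ := hT.2 v hv
  exact (hM.1 e (hTM heT)).2 v hve

lemma pairing_sdiff {s t : Finset α} {M T : Finset (Sym2 α)}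
    (hM : IsPairingOn s M) (hT : IsPairingOn t T) (hTM : T ⊆ M) :
    IsPairingOn (s \ t) (M \ T) := by
  have key := pairing_mem_sub_iff hM hT hTM
  constructor
  · intro e he
    have heM := (mem_sdiff.mp he).1
    have heT := (mem_sdiff.mp he).2
    refine ⟨(hM.1 e heM).1, fun v hv => ?_⟩
    refine mem_sdiff.mpr ⟨(hM.1 e heM).2 v hv, fun hvt => heT ?_⟩
    exact (key e heM).mpr ⟨v, hv, hvt⟩
  · intro v hv
    obtain ⟨hvs, hvt⟩ := mem_sdiff.mp hv
    obtain ⟨e, ⟨heM, hve⟩, hu⟩ := hM.2 v hvs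
    have heT : e ∉ T := fun heT => hvt ((hT.1 e heT).2 v hve)
    exact ⟨e, ⟨mem_sdiff.mpr ⟨heM, heT⟩, hve⟩,
      fun e' ⟨he', hve'⟩ => hu e' ⟨(mem_sdiff.mp he').1, hve'⟩⟩

lemma card_pairings_filter {s t : Finset α} {T : Finset (Sym2 α)}
    (hT : IsPairingOn t T) (hts : t ⊆ s) :
    ((pairings s).filter (fun M => T ⊆ M)).card = (pairings (s \ t)).card := by
  apply Finset.card_bij' (fun M _ => M \ T) (fun M' _ => M' ∪ T)
  · intro M hM
    obtain ⟨hM1, hM2⟩ := mem_filter.mp hM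
    exact mem_pairings.mpr (pairing_sdiff (mem_pairings.mp hM1) hT hM2)
  · intro M' hM'
    have hM'p := mem_pairings.mp hM'
    have : IsPairingOn ((s \ t) ∪ t) (M' ∪ T) :=
      pairing_union hM'p hT sdiff_disjoint
    rw [sdiff_union_of_subset hts] at this
    exact mem_filter.mpr ⟨mem_pairings.mpr this, subset_union_right⟩
  · intro M hM
    exact sdiff_union_of_subset (mem_filter.mp hM).2
  · intro M' hM'
    have hM'p := mem_pairings.mp hM'
    apply union_sdiff_cancel_right
    rw [disjoint_left]
    intro e heM' heT
    obtain ⟨v, hv⟩ := Sym2.exists_mem e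
    have h1 : v ∈ s \ t := (hM'p.1 e heM').2 v hv
    have h2 : v ∈ t := (hT.1 e heT).2 v hv
    exact (mem_sdiff.mp h1).2 h2

def pcount : ℕ → ℕ
  | 0 => 1
  | (n+1) => (2*n+1) * pcount n

lemma pairings_empty : pairings (∅ : Finset α) = {∅} := by
  ext M
  simp only [mem_pairings, mem_singleton]
  constructor
  · rintro ⟨h1, _⟩
    by_contra hne
    obtain ⟨e, he⟩ := Finset.nonempty_iff_ne_empty.mpr hne
    obtain ⟨v, hv⟩ := Sym2.exists_mem e
    exact absurd ((h1 e he).2 v hv) (by simp)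
  · rintro rfl
    exact ⟨by simp, by simp⟩

lemma pairing_single {a b : α} (hab : a ≠ b) :
    IsPairingOn {a, b} ({s(a, b)} : Finset (Sym2 α)) := by
  constructor
  · intro e he
    rw [mem_singleton] at he
    subst he
    refine ⟨by simpa using hab, fun v hv => ?_⟩
    rw [Sym2.mem_iff] at hv
    simp [hv]
  · intro v hv
    refine ⟨s(a, b), ⟨mem_singleton_self _, ?_⟩, fun e' ⟨he', _⟩ => mem_singleton.mp he'⟩
    simp only [mem_insert, mem_singleton] at hv
    rw [Sym2.mem_iff]
    exact hv

lemma card_pairings : ∀ (n : ℕ) (s : Finset α), s.card = 2 * n →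
    (pairings s).card = pcount n := by
  intro n
  induction n with
  | zero =>
    intro s hs
    rw [Nat.mul_zero, Finset.card_eq_zero] at hs
    subst hs
    rw [pairings_empty]
    rfl
  | succ n ih =>
    intro s hs
    have hsne : s.Nonempty := by rw [← Finset.card_pos, hs]; omega
    obtain ⟨a, ha⟩ := hsne
    have hsplit : pairings s =
        (s.erase a).biUnion (fun b => (pairings s).filter (fun M => s(a, b) ∈ M)) := by
      apply Finset.Subset.antisymm
      · intro M hM
        have hMp := mem_pairings.mp hM
        obtain ⟨e, ⟨heM, hae⟩, _⟩ := hMp.2 a ha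
        obtain ⟨hnd, hvert⟩ := hMp.1 e heM
        rw [Finset.mem_biUnion]
        obtain ⟨x, y⟩ := e
        rw [Sym2.mem_iff] at hae
        rcases hae with rfl | rfl
        · refine ⟨y, ?_, mem_filter.mpr ⟨hM, heM⟩⟩
          refine mem_erase.mpr ⟨fun h => hnd (by simp [h]), hvert y (by simp)⟩
        · refine ⟨x, mem_erase.mpr ⟨fun h => hnd (by simp [h]), hvert x (by simp)⟩,
            mem_filter.mpr ⟨hM, ?_⟩⟩
          rwa [Sym2.eq_swap]
      · exact Finset.biUnion_subset.mpr (fun b _ => filter_subset _ _)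
    rw [hsplit, Finset.card_biUnion]
    · have hcard : ∀ b ∈ s.erase a,
          ((pairings s).filter (fun M => s(a, b) ∈ M)).card = pcount n := by
        intro b hb
        obtain ⟨hba, hbs⟩ := mem_erase.mp hb
        have hab : a ≠ b := fun h => hba h.symm
        have h1 : ((pairings s).filter (fun M => s(a, b) ∈ M)) =
            ((pairings s).filter (fun M => ({s(a, b)} : Finset (Sym2 α)) ⊆ M)) := by
          simp only [Finset.singleton_subset_iff]
        rw [h1, card_pairings_filter (pairing_single hab)
          (by rw [Finset.insert_subset_iff]; exact ⟨ha, Finset.singleton_subset_iff.mpr hbs⟩)]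
        apply ih
        rw [Finset.card_sdiff_of_subset
          (by rw [Finset.insert_subset_iff]; exact ⟨ha, Finset.singleton_subset_iff.mpr hbs⟩)]
        rw [hs, Finset.card_insert_of_notMem (by simpa using hab), Finset.card_singleton]
        omega
      rw [Finset.sum_congr rfl hcard, Finset.sum_const, Finset.card_erase_of_mem ha, hs]
      show (2 * (n + 1) - 1) * pcount n = pcount (n + 1)
      have : 2 * (n + 1) - 1 = 2 * n + 1 := by omega
      rw [this]
      rfl
    · intro b hb b' hb' hbb'
      rw [Function.onFun, Finset.disjoint_left]
      intro M hMb hMb'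
      obtain ⟨hM, hebM⟩ := mem_filter.mp hMb
      have heb'M := (mem_filter.mp hMb').2
      have hMp := mem_pairings.mp hM
      obtain ⟨e, _, hu⟩ := hMp.2 a ha
      have h1 := hu _ ⟨hebM, by simp⟩
      have h2 := hu _ ⟨heb'M, by simp⟩
      exact hbb' (Sym2.congr_right.mp (h1.trans h2.symm))

def sparse (n j : ℕ) : Finset (Finset ℕ) :=
  ((Finset.range n).powersetCard j).filter (fun A => ∀ i ∈ A, i + 1 ∉ A)

lemma mem_sparse {n j : ℕ} {A : Finset ℕ} :
    A ∈ sparse n j ↔ (A ⊆ Finset.range n ∧ A.card = j) ∧ ∀ i ∈ A, i + 1 ∉ A := by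
  unfold sparse
  rw [mem_filter, Finset.mem_powersetCard]

lemma sparse_zero (n : ℕ) : sparse n 0 = {∅} := by
  ext A
  rw [mem_sparse, Finset.mem_singleton]
  constructor
  · rintro ⟨⟨-, hc⟩, -⟩; exact Finset.card_eq_zero.mp hc
  · rintro rfl; simp

lemma sparse_big {n j : ℕ} (h : n < j) : sparse n j = ∅ := by
  ext A
  simp only [mem_sparse, Finset.notMem_empty, iff_false]
  rintro ⟨⟨hsub, hc⟩, -⟩
  have := Finset.card_le_card hsub
  rw [hc, Finset.card_range] at this
  omega

lemma card_sparse : ∀ n j, (sparse n j).card = (n + 1 - j).choose j := by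
  intro n
  induction n using Nat.strong_induction_on with
  | _ n ih =>
    match n with
    | 0 =>
      intro j
      match j with
      | 0 => rw [sparse_zero]; simp
      | (j+1) => rw [sparse_big (by omega)]; simp [Nat.choose_eq_zero_of_lt]
    | 1 =>
      intro j
      match j with
      | 0 => rw [sparse_zero]; simp
      | 1 =>
        have : sparse 1 1 = {{0}} := by
          ext A
          simp only [mem_sparse, Finset.mem_singleton]
          constructor
          · rintro ⟨⟨hsub, hc⟩, -⟩
            obtain ⟨x, hx⟩ := Finset.card_eq_one.mp hc
            subst hx
            have := hsub (Finset.mem_singleton_self x)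
            simp only [Finset.mem_range] at this
            interval_cases x
            rfl
          · rintro rfl
            refine ⟨⟨?_, rfl⟩, ?_⟩ <;> simp
        rw [this]; simp
      | (j+2) => rw [sparse_big (by omega)]; simp [Nat.choose_eq_zero_of_lt]
    | (n+2) =>
      intro j
      match j with
      | 0 => rw [sparse_zero]; simp
      | (j+1) =>
        have hsplit := Finset.card_filter_add_card_filter_not
          (s := sparse (n+2) (j+1)) (p := fun A => (n+1) ∈ A)
        have h1 : ((sparse (n+2) (j+1)).filter (fun A => ¬ (n+1) ∈ A)) =
            sparse (n+1) (j+1) := by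
          ext A
          simp only [mem_filter, mem_sparse]
          constructor
          · rintro ⟨⟨⟨hsub, hc⟩, hsp⟩, hnot⟩
            refine ⟨⟨fun x hx => ?_, hc⟩, hsp⟩
            have := hsub hx
            rw [Finset.mem_range] at this ⊢
            rcases Nat.lt_or_ge x (n+1) with h | h
            · exact h
            · exfalso; apply hnot; have hxe : x = n + 1 := by omega
              rwa [← hxe]
          · rintro ⟨⟨hsub, hc⟩, hsp⟩
            refine ⟨⟨⟨fun x hx => ?_, hc⟩, hsp⟩, fun hmem => ?_⟩
            · have := hsub hx; rw [Finset.mem_range] at this ⊢; omega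
            · have := hsub hmem; rw [Finset.mem_range] at this; omega
        have h2 : ((sparse (n+2) (j+1)).filter (fun A => (n+1) ∈ A)).card =
            (sparse n j).card := by
          refine Finset.card_bij' (fun A _ => A.erase (n+1)) (fun B _ => insert (n+1) B)
            ?hi ?hj ?li ?ri
          case hi =>
            intro A hA
            obtain ⟨hAs, hmem⟩ := mem_filter.mp hA
            obtain ⟨⟨hsub, hc⟩, hsp⟩ := mem_sparse.mp hAs
            have hn : n ∉ A := fun hn => hsp n hn hmem
            refine mem_sparse.mpr ⟨⟨fun x hx => ?_, ?_⟩, fun i hi hi1 => ?_⟩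
            · obtain ⟨hxne, hxA⟩ := Finset.mem_erase.mp hx
              have := hsub hxA
              rw [Finset.mem_range] at this ⊢
              rcases Nat.lt_or_ge x n with h | h
              · exact h
              · exfalso
                rcases Nat.lt_or_ge x (n+1) with h' | h'
                · have hxe : x = n := by omega
                  exact hn (hxe ▸ hxA)
                · exact hxne (by omega)
            · rw [Finset.card_erase_of_mem hmem, hc]
              omega
            · exact hsp i (Finset.mem_erase.mp hi).2 (Finset.mem_erase.mp hi1).2
          case hj =>
            intro B hB
            obtain ⟨⟨hsub, hc⟩, hsp⟩ := mem_sparse.mp hB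
            have hnB : (n+1) ∉ B := fun h => by
              have := hsub h; rw [Finset.mem_range] at this; omega
            refine mem_filter.mpr ⟨mem_sparse.mpr ⟨⟨?_, ?_⟩, ?_⟩, Finset.mem_insert_self _ _⟩
            · intro x hx
              rcases Finset.mem_insert.mp hx with rfl | h
              · simp
              · have := hsub h; rw [Finset.mem_range] at this ⊢; omega
            · rw [Finset.card_insert_of_notMem hnB, hc]
            · intro i hi hi1
              rcases Finset.mem_insert.mp hi with rfl | hiB
              · rcases Finset.mem_insert.mp hi1 with h | h
                · omega
                · have := hsub h; rw [Finset.mem_range] at this; omega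
              · have hiB' := hsub hiB
                rw [Finset.mem_range] at hiB'
                rcases Finset.mem_insert.mp hi1 with h | h
                · omega
                · exact hsp i hiB h
          case li =>
            intro A hA
            exact Finset.insert_erase (mem_filter.mp hA).2
          case ri =>
            intro B hB
            apply Finset.erase_insert
            intro h
            have := (mem_sparse.mp hB).1.1 h
            rw [Finset.mem_range] at this
            omega
        rw [h1, h2] at hsplit
        have e1 := ih (n+1) (by omega) (j+1)
        have e2 := ih n (by omega) j
        rcases Nat.lt_or_ge (n+1) j with hj | hj
        · have z1 : (n + 1 + 1 - (j+1)).choose (j+1) = 0 :=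
            Nat.choose_eq_zero_of_lt (by omega)
          have z2 : (n + 1 - j).choose j = 0 := Nat.choose_eq_zero_of_lt (by omega)
          have z3 : (n + 2 + 1 - (j+1)).choose (j+1) = 0 :=
            Nat.choose_eq_zero_of_lt (by omega)
          omega
        · have h3 : n + 2 + 1 - (j+1) = (n + 1 - j) + 1 := by omega
          have key : (n + 2 + 1 - (j+1)).choose (j+1) =
              (n + 1 - j).choose j + (n + 1 - j).choose (j+1) := by
            rw [h3, Nat.choose_succ_succ]
          have h4 : n + 1 + 1 - (j+1) = n + 1 - j := by omega
          rw [h4] at e1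
          omega

lemma pairing_card : ∀ (T : Finset (Sym2 α)) (t : Finset α),
    IsPairingOn t T → t.card = 2 * T.card := by
  intro T
  induction T using Finset.strongInductionOn with
  | _ T ih =>
    intro t h
    rcases T.eq_empty_or_nonempty with rfl | ⟨e, he⟩
    · have : t = ∅ := by
        rw [Finset.eq_empty_iff_forall_notMem]
        intro v hv
        obtain ⟨e, ⟨he, -⟩, -⟩ := h.2 v hv
        simp at he
      simp [this]
    · obtain ⟨⟨x, y⟩, rfl⟩ := e.exists_rep
      have hnd := (h.1 _ he).1
      have hxy : x ≠ y := fun hh => hnd (by simp [hh])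
      have hxt : x ∈ t := (h.1 _ he).2 x (by simp)
      have hyt : y ∈ t := (h.1 _ he).2 y (by simp)
      have hsub : ({x, y} : Finset α) ⊆ t := by
        rw [Finset.insert_subset_iff]; exact ⟨hxt, Finset.singleton_subset_iff.mpr hyt⟩
      have h1 := pairing_sdiff h (pairing_single hxy)
        (Finset.singleton_subset_iff.mpr he)
      rw [Finset.sdiff_singleton_eq_erase] at h1
      have h2 := ih _ (Finset.erase_ssubset he) _ h1
      have h3 : ({x, y} : Finset α).card = 2 := by
        rw [Finset.card_insert_of_notMem (by simpa using hxy), Finset.card_singleton]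
      have h4 := Finset.card_sdiff_of_subset hsub
      have h5 := Finset.card_le_card hsub
      have h6 := Finset.card_erase_of_mem he
      have h7 : 0 < T.card := Finset.card_pos.mpr ⟨_, he⟩
      omega

open Fin.NatCast

section PathApp

variable {N : ℕ} [NeZero N]

noncomputable def pathE (N : ℕ) [NeZero N] : Finset (Sym2 (Fin N)) :=
  Finset.univ.filter (fun e => ∃ i : ℕ, i + 1 < N ∧ e = s((i : Fin N), ((i+1 : ℕ) : Fin N)))

lemma mem_pathE {e : Sym2 (Fin N)} :
    e ∈ pathE N ↔ ∃ i : ℕ, i + 1 < N ∧ e = s((i : Fin N), ((i+1 : ℕ) : Fin N)) := by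
  unfold pathE
  simp

lemma mem_pathE' {u v : Fin N} :
    s(u, v) ∈ pathE N ↔ (u.val + 1 = v.val ∨ v.val + 1 = u.val) := by
  rw [mem_pathE]
  constructor
  · rintro ⟨i, hi, heq⟩
    have hv1 : ((i : Fin N) : ℕ) = i := Fin.val_cast_of_lt (by omega)
    have hv2 : (((i+1 : ℕ) : Fin N) : ℕ) = i + 1 := Fin.val_cast_of_lt hi
    rw [Sym2.eq_iff] at heq
    rcases heq with ⟨rfl, rfl⟩ | ⟨rfl, rfl⟩
    · left; rw [hv1, hv2]
    · right; rw [hv1, hv2]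
  · rintro (h | h)
    · refine ⟨u.val, by omega, ?_⟩
      rw [Sym2.eq_iff]
      left
      constructor
      · exact (Fin.cast_val_eq_self u).symm
      · rw [h]; exact (Fin.cast_val_eq_self v).symm
    · refine ⟨v.val, by omega, ?_⟩
      rw [Sym2.eq_iff]
      right
      constructor
      · rw [h]; exact (Fin.cast_val_eq_self u).symm
      · exact (Fin.cast_val_eq_self v).symm

lemma compl_pathGraph_edgeSet {e : Sym2 (Fin N)} :
    e ∈ ((SimpleGraph.pathGraph N)ᶜ).edgeSet ↔ ¬ e.IsDiag ∧ e ∉ pathE N := by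
  obtain ⟨⟨u, v⟩, rfl⟩ := e.exists_rep
  rw [SimpleGraph.mem_edgeSet, SimpleGraph.compl_adj, SimpleGraph.pathGraph_adj,
    mem_pathE']
  simp [Sym2.isDiag_iff_proj_eq]

end PathApp

section PathApp2

variable {N : ℕ} [NeZero N]

noncomputable def suppOf (T : Finset (Sym2 (Fin N))) : Finset (Fin N) :=
  Finset.univ.filter (fun v => ∃ e ∈ T, v ∈ e)

lemma mem_suppOf {T : Finset (Sym2 (Fin N))} {v : Fin N} :
    v ∈ suppOf T ↔ ∃ e ∈ T, v ∈ e := by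
  unfold suppOf; simp

def lo : Sym2 (Fin N) → ℕ := Sym2.lift ⟨fun a b => min a.val b.val, fun a b => min_comm _ _⟩

noncomputable def edgeOf (N : ℕ) [NeZero N] (i : ℕ) : Sym2 (Fin N) :=
  s((i : Fin N), ((i+1 : ℕ) : Fin N))

lemma lo_edgeOf {i : ℕ} (h : i + 1 < N) : lo (edgeOf N i) = i := by
  have h0 : lo (edgeOf N i) = min ((i : Fin N) : ℕ) (((i+1:ℕ) : Fin N) : ℕ) := rfl
  rw [h0, Fin.val_cast_of_lt (by omega), Fin.val_cast_of_lt h]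
  omega

lemma edgeOf_mem {i : ℕ} (h : i + 1 < N) : edgeOf N i ∈ pathE N :=
  mem_pathE.mpr ⟨i, h, rfl⟩

lemma mem_edgeOf_val {i : ℕ} (h : i + 1 < N) {v : Fin N} (hv : v ∈ edgeOf N i) :
    v.val = i ∨ v.val = i + 1 := by
  unfold edgeOf at hv
  rw [Sym2.mem_iff] at hv
  rcases hv with rfl | rfl
  · left; exact Fin.val_cast_of_lt (by omega)
  · right; exact Fin.val_cast_of_lt h

lemma lo_spec {e : Sym2 (Fin N)} (he : e ∈ pathE N) :
    lo e + 1 < N ∧ e = edgeOf N (lo e) := by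
  obtain ⟨i, hi, rfl⟩ := mem_pathE.mp he
  have : lo (edgeOf N i) = i := lo_edgeOf hi
  unfold edgeOf at this ⊢
  rw [this]
  exact ⟨hi, rfl⟩

lemma card_path_matchings (j : ℕ) :
    ((pathE N).powerset.filter
      (fun T => IsPairingOn (suppOf T) T ∧ T.card = j)).card = (sparse (N-1) j).card := by
  refine Finset.card_bij' (fun T _ => T.image lo) (fun A _ => A.image (edgeOf N))
    ?hi ?hj ?li ?ri
  case hi =>
    intro T hT
    have hfl := mem_filter.mp hT
    have hTP := mem_powerset.mp hfl.1
    have hTm := hfl.2.1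
    have hTc := hfl.2.2
    have hloinj : Set.InjOn lo (T : Set (Sym2 (Fin N))) := by
      intro e he e' he' hee
      obtain ⟨h1, h2⟩ := lo_spec (hTP he)
      obtain ⟨h1', h2'⟩ := lo_spec (hTP he')
      rw [h2, h2', hee]
    refine mem_sparse.mpr ⟨⟨?_, ?_⟩, ?_⟩
    · intro x hx
      obtain ⟨e, he, rfl⟩ := Finset.mem_image.mp hx
      have := (lo_spec (hTP he)).1
      rw [Finset.mem_range]
      omega
    · rw [Finset.card_image_of_injOn hloinj, hTc]
    · intro i hi hi1
      obtain ⟨e, he, hloe⟩ := Finset.mem_image.mp hi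
      obtain ⟨e', he', hloe'⟩ := Finset.mem_image.mp hi1
      obtain ⟨hb, heq⟩ := lo_spec (hTP he)
      obtain ⟨hb', heq'⟩ := lo_spec (hTP he')
      rw [hloe] at heq hb
      rw [hloe'] at heq' hb'
      -- shared vertex ↑(i+1)
      have hv : (((i+1 : ℕ)) : Fin N) ∈ e := by rw [heq]; unfold edgeOf; simp
      have hv' : (((i+1 : ℕ)) : Fin N) ∈ e' := by rw [heq']; unfold edgeOf; simp
      have hvs : (((i+1 : ℕ)) : Fin N) ∈ suppOf T := mem_suppOf.mpr ⟨e, he, hv⟩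
      obtain ⟨f, -, hu⟩ := hTm.2 _ hvs
      have h1 := hu e ⟨he, hv⟩
      have h2 := hu e' ⟨he', hv'⟩
      have : e = e' := h1.trans h2.symm
      rw [this, hloe'] at hloe
      omega
  case hj =>
    intro A hA
    obtain ⟨⟨hsub, hc⟩, hsp⟩ := mem_sparse.mp hA
    have hbound : ∀ i ∈ A, i + 1 < N := by
      intro i hi
      have := hsub hi
      rw [Finset.mem_range] at this
      omega
    have hinj : Set.InjOn (edgeOf N) A := by
      intro i hi i' hi' he
      have := lo_edgeOf (hbound i hi)
      rw [he, lo_edgeOf (hbound i' hi')] at this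
      omega
    refine mem_filter.mpr ⟨mem_powerset.mpr ?_, ⟨⟨?_, ?_⟩, ?_⟩⟩
    · intro e he
      obtain ⟨i, hi, rfl⟩ := Finset.mem_image.mp he
      exact edgeOf_mem (hbound i hi)
    · intro e he
      obtain ⟨i, hi, rfl⟩ := Finset.mem_image.mp he
      constructor
      · intro hd
        unfold edgeOf at hd
        rw [Sym2.mk_isDiag_iff] at hd
        have h1 : ((i : Fin N) : ℕ) = i := Fin.val_cast_of_lt (by have := hbound i hi; omega)
        have h2 : (((i+1:ℕ) : Fin N) : ℕ) = i+1 := Fin.val_cast_of_lt (hbound i hi)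
        rw [hd] at h1
        omega
      · intro v hv
        exact mem_suppOf.mpr ⟨_, he, hv⟩
    · intro v hv
      obtain ⟨e, he, hve⟩ := mem_suppOf.mp hv
      refine ⟨e, ⟨he, hve⟩, ?_⟩
      rintro e' ⟨he', hve'⟩
      obtain ⟨i, hi, rfl⟩ := Finset.mem_image.mp he
      obtain ⟨i', hi', rfl⟩ := Finset.mem_image.mp he'
      have hval := mem_edgeOf_val (hbound i hi) hve
      have hval' := mem_edgeOf_val (hbound i' hi') hve'
      have : i = i' := by
        rcases hval with h | h <;> rcases hval' with h' | h'
        · omega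
        · exfalso; apply hsp i' hi'
          have hh : i = i' + 1 := by omega
          rw [← hh]; exact hi
        · exfalso; apply hsp i hi
          have hh : i' = i + 1 := by omega
          rw [← hh]; exact hi'
        · omega
      rw [this]
    · rw [Finset.card_image_of_injOn hinj, hc]
  case li =>
    intro T hT
    have hTP : T ⊆ pathE N := mem_powerset.mp (mem_filter.mp hT).1
    rw [Finset.image_image]
    nth_rewrite 2 [← Finset.image_id (s := T)]
    apply Finset.image_congr
    intro e he
    exact (lo_spec (hTP he)).2.symm
  case ri =>
    intro A hA
    obtain ⟨⟨hsub, -⟩, -⟩ := mem_sparse.mp hA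
    rw [Finset.image_image]
    nth_rewrite 2 [← Finset.image_id (s := A)]
    apply Finset.image_congr
    intro i hi
    have : i + 1 < N := by have := hsub hi; rw [Finset.mem_range] at this; omega
    exact lo_edgeOf this

end PathApp2

lemma pcount_fact : ∀ k : ℕ, pcount k * (k.factorial * 2^k) = (2*k).factorial := by
  intro k
  induction k with
  | zero => rfl
  | succ k ih =>
    have e1 : pcount (k+1) = (2*k+1) * pcount k := rfl
    have e2 : (k+1).factorial = (k+1) * k.factorial := Nat.factorial_succ _
    have e3 : (2*(k+1)).factorial = (2*k+1+1) * ((2*k+1) * (2*k).factorial) := by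
      rw [show 2*(k+1) = (2*k+1)+1 by ring, Nat.factorial_succ, Nat.factorial_succ]
    rw [e1, e2, e3, pow_succ, ← ih]
    ring

lemma term_eq {m k : ℕ} (hk : k ≤ m) :
    (m+k).factorial / (k.factorial * (m-k).factorial * 2^k) =
      (m+k).choose (m-k) * pcount k := by
  have h2k : 2*k ≤ m + k := by omega
  have hsymm : (m+k).choose (m-k) = (m+k).choose (2*k) := by
    have := Nat.choose_symm h2k
    rw [show m + k - 2*k = m - k by omega] at this
    exact this
  have hfac : (m+k).choose (2*k) * (2*k).factorial * (m+k-2*k).factorial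
      = (m+k).factorial := Nat.choose_mul_factorial_mul_factorial h2k
  rw [show m + k - 2*k = m - k by omega] at hfac
  apply Nat.div_eq_of_eq_mul_left
  · positivity
  · rw [hsymm, ← hfac, ← pcount_fact k]
    ring

lemma submatching {N : ℕ} [NeZero N] {s : Finset (Fin N)} {M T : Finset (Sym2 (Fin N))}
    (hM : IsPairingOn s M) (hTM : T ⊆ M) : IsPairingOn (suppOf T) T := by
  constructor
  · intro e he
    exact ⟨(hM.1 e (hTM he)).1, fun v hv => mem_suppOf.mpr ⟨e, he, hv⟩⟩
  · intro v hv
    obtain ⟨e, he, hve⟩ := mem_suppOf.mp hv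
    refine ⟨e, ⟨he, hve⟩, ?_⟩
    rintro e' ⟨he', hve'⟩
    have hvs : v ∈ s := (hM.1 e (hTM he)).2 v hve
    obtain ⟨f, -, hu⟩ := hM.2 v hvs
    exact (hu e' ⟨hTM he', hve'⟩).trans (hu e ⟨hTM he, hve⟩).symm

/-- For `m ≥ 1`, the number of perfect matchings of the complement of the
path graph `P_{2m}` (equivalently, loopless linear chord diagrams with `m` chords)
equals `Σ_{k=0}^{m} (−1)^{m−k} · (m+k)!/(k!·(m−k)!·2^k)` in the integers. -/
theorem card_perfectMatchings_compl_pathGraph (m : ℕ) (hm : 0 < m) :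
    (Nat.card {M : Finset (Sym2 (Fin (2 * m))) //
        (∀ e ∈ M, e ∈ ((SimpleGraph.pathGraph (2 * m))ᶜ).edgeSet) ∧
        (∀ v : Fin (2 * m), ∃! e, e ∈ M ∧ v ∈ e)} : ℤ) =
      ∑ k ∈ Finset.range (m + 1),
        (-1 : ℤ) ^ (m - k) *
          ((Nat.factorial (m + k) /
            (Nat.factorial k * Nat.factorial (m - k) * 2 ^ k) : ℕ) : ℤ) := by
  haveI : NeZero (2*m) := ⟨by omega⟩
  have hcardU : (Finset.univ : Finset (Fin (2*m))).card = 2 * m := by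
    rw [Finset.card_univ, Fintype.card_fin]
  set P : Finset (Sym2 (Fin (2*m))) := pathE (2*m) with hP
  set pr : Finset (Finset (Sym2 (Fin (2*m)))) :=
    pairings (Finset.univ : Finset (Fin (2*m))) with hpr
  set Q : Finset (Finset (Sym2 (Fin (2*m)))) :=
    P.powerset.filter (fun T => IsPairingOn (suppOf T) T) with hQ
  -- Step 1 : translate the subtype count
  have step1 : (Nat.card {M : Finset (Sym2 (Fin (2 * m))) //
      (∀ e ∈ M, e ∈ ((SimpleGraph.pathGraph (2 * m))ᶜ).edgeSet) ∧
      (∀ v : Fin (2 * m), ∃! e, e ∈ M ∧ v ∈ e)}) =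
      (pr.filter (fun M => M ∩ P = ∅)).card := by
    rw [Nat.card_eq_fintype_card, Fintype.card_subtype]
    congr 1
    ext M
    simp only [Finset.mem_filter, Finset.mem_univ, true_and]
    constructor
    · rintro ⟨h1, h2⟩
      refine ⟨mem_pairings.mpr ⟨fun e he => ⟨(compl_pathGraph_edgeSet.mp (h1 e he)).1,
        fun v _ => Finset.mem_univ v⟩, fun v _ => h2 v⟩, ?_⟩
      rw [Finset.eq_empty_iff_forall_notMem]
      intro e he
      rw [Finset.mem_inter] at he
      exact (compl_pathGraph_edgeSet.mp (h1 e he.1)).2 he.2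
    · rintro ⟨h1, h2⟩
      have h1' := mem_pairings.mp h1
      refine ⟨fun e he => compl_pathGraph_edgeSet.mpr ⟨(h1'.1 e he).1, fun heP => ?_⟩,
        fun v => h1'.2 v (Finset.mem_univ v)⟩
      rw [Finset.eq_empty_iff_forall_notMem] at h2
      exact h2 e (Finset.mem_inter.mpr ⟨he, heP⟩)
  -- facts about Q
  have hcardQ : ∀ T ∈ Q, T.card ≤ m := by
    intro T hT
    have hTm := (Finset.mem_filter.mp hT).2
    have h1 := pairing_card T (suppOf T) hTm
    have h2 : (suppOf T).card ≤ (Finset.univ : Finset (Fin (2*m))).card :=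
      Finset.card_le_card (Finset.subset_univ _)
    omega
  have hvalQ : ∀ T ∈ Q, (pr.filter (fun M => T ⊆ M)).card = pcount (m - T.card) := by
    intro T hT
    have hTm := (Finset.mem_filter.mp hT).2
    rw [hpr, card_pairings_filter hTm (Finset.subset_univ _)]
    apply card_pairings
    rw [Finset.card_sdiff_of_subset (Finset.subset_univ _), hcardU, pairing_card T (suppOf T) hTm]
    have := hcardQ T hT
    omega
  have hzero : ∀ T ∈ P.powerset, T ∉ Q → (pr.filter (fun M => T ⊆ M)) = ∅ := by
    intro T hTP hTQ
    rw [Finset.eq_empty_iff_forall_notMem]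
    intro M hM
    obtain ⟨hMpr, hTM⟩ := Finset.mem_filter.mp hM
    exact hTQ (Finset.mem_filter.mpr ⟨hTP, submatching (mem_pairings.mp hMpr) hTM⟩)
  rw [step1]
  calc ((pr.filter (fun M => M ∩ P = ∅)).card : ℤ)
      = ∑ M ∈ pr, (if M ∩ P = ∅ then (1:ℤ) else 0) := (Finset.sum_boole _ _).symm
    _ = ∑ M ∈ pr, ∑ T ∈ (M ∩ P).powerset, (-1:ℤ)^T.card :=
        Finset.sum_congr rfl fun M _ => (Finset.sum_powerset_neg_one_pow_card).symm
    _ = ∑ M ∈ pr, ∑ T ∈ P.powerset, (if T ⊆ M then (-1:ℤ)^T.card else 0) := by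
        refine Finset.sum_congr rfl fun M _ => ?_
        rw [← Finset.sum_filter]
        refine Finset.sum_congr ?_ (fun _ _ => rfl)
        ext T
        simp only [Finset.mem_powerset, Finset.mem_filter, Finset.subset_inter_iff]
        tauto
    _ = ∑ T ∈ P.powerset, ∑ M ∈ pr, (if T ⊆ M then (-1:ℤ)^T.card else 0) :=
        Finset.sum_comm
    _ = ∑ T ∈ P.powerset, (-1:ℤ)^T.card * ((pr.filter (fun M => T ⊆ M)).card : ℤ) := by
        refine Finset.sum_congr rfl fun T _ => ?_
        rw [← Finset.sum_filter, Finset.sum_const, nsmul_eq_mul, mul_comm]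
    _ = ∑ T ∈ Q, (-1:ℤ)^T.card * ((pcount (m - T.card) : ℕ) : ℤ) := by
        rw [← Finset.sum_subset (Finset.filter_subset _ _)
          (fun T hT hTQ => by rw [hzero T hT hTQ]; simp)]
        exact Finset.sum_congr rfl fun T hT => by rw [hvalQ T hT]
    _ = ∑ j ∈ Finset.range (m+1), ∑ T ∈ Q.filter (fun T => T.card = j),
          (-1:ℤ)^T.card * ((pcount (m - T.card) : ℕ) : ℤ) :=
        (Finset.sum_fiberwise_of_maps_to
          (fun T hT => Finset.mem_range.mpr (by have := hcardQ T hT; omega)) _).symm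
    _ = ∑ j ∈ Finset.range (m+1),
          (((2*m - j).choose j : ℕ) : ℤ) * ((-1:ℤ)^j * ((pcount (m - j) : ℕ) : ℤ)) := by
        refine Finset.sum_congr rfl fun j hj => ?_
        have hconst : ∀ T ∈ Q.filter (fun T => T.card = j),
            (-1:ℤ)^T.card * ((pcount (m - T.card) : ℕ) : ℤ)
              = (-1:ℤ)^j * ((pcount (m - j) : ℕ) : ℤ) := by
          intro T hT
          rw [(Finset.mem_filter.mp hT).2]
        rw [Finset.sum_congr rfl hconst, Finset.sum_const, nsmul_eq_mul]
        have hcard : (Q.filter (fun T => T.card = j)).card = (2*m - j).choose j := by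
          rw [hQ, Finset.filter_filter, card_path_matchings j, card_sparse]
          congr 1
          omega
        rw [hcard]
    _ = ∑ k ∈ Finset.range (m + 1), (-1 : ℤ) ^ (m - k) *
          ((Nat.factorial (m + k) /
            (Nat.factorial k * Nat.factorial (m - k) * 2 ^ k) : ℕ) : ℤ) := by
        rw [← Finset.sum_range_reflect]
        refine Finset.sum_congr rfl fun k hk => ?_
        have hk' : k ≤ m := by rw [Finset.mem_range] at hk; omega
        have h1 : m + 1 - 1 - k = m - k := by omega
        have h2 : 2*m - (m-k) = m + k := by omega
        have h3 : m - (m-k) = k := by omega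
        rw [h1, h2, h3, term_eq hk']
        push_cast
        ring
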